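/- arXiv:2208.03606 — 6 statements merged into one kernel-verified Lean document; each statement's English description precedes it below -/
import Mathlib

section
/- There exists a semimodular lattice K and a congruence α of K such that the quotient lattice K/α is not semimodular. Concretely, let K = {o, i} ∪ ({0,1} × ℚ) ordered so that o is the least element, i is the greatest element, and (a,x) ≤ (b,y) iff a = b and x ≤ y; then K is semimodular, but for the congruence α whose nonsingleton blocks are {(0,x) : x < √2}, {(0,x) : x > √2}, and {1} × ℚ, the quotient K/α is isomorphic to the pentagon N₅, which is not semimodular. -/
/-- A lattice is (upper) semimodular: `a ⋖ b` and `a ≤ c` imply `a ⊔ c ⪯ b ⊔ c`. -/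
def IsSemimodular (L : Type) [Lattice L] : Prop :=
  ∀ a b c : L, a ⋖ b → a ≤ c → (a ⊔ c = b ⊔ c ∨ (a ⊔ c) ⋖ (b ⊔ c))

/-- `M` is a quotient of the semimodular lattice `K` (via a surjective lattice
homomorphism, i.e. `M ≅ K/α` for the kernel congruence `α`), yet `M` is not semimodular. -/
def QuotientNotSemimodularWitness (K M : Type) [Lattice K] [Lattice M] : Prop :=
  (∃ f : LatticeHom K M, Function.Surjective f) ∧ IsSemimodular K ∧ ¬ IsSemimodular M

/-! N₅ -/
inductive N5 where
  | bot | a | b | c | top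
  deriving DecidableEq

namespace N5

def leB : N5 → N5 → Bool
  | .bot, _ => true
  | _, .top => true
  | .a, .a => true
  | .a, .b => true
  | .b, .b => true
  | .c, .c => true
  | _, _ => false

instance : LE N5 := ⟨fun x y => leB x y = true⟩
instance : LT N5 := ⟨fun x y => x ≤ y ∧ ¬ y ≤ x⟩
instance : DecidableRel (· ≤ · : N5 → N5 → Prop) := fun x y => inferInstanceAs (Decidable (_ = true))
instance : DecidableRel (· < · : N5 → N5 → Prop) := fun x y => inferInstanceAs (Decidable (_ ∧ _))

instance : Fintype N5 :=
  ⟨⟨{.bot, .a, .b, .c, .top}, by decide⟩, fun x => by cases x <;> decide⟩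

def supN : N5 → N5 → N5
  | .bot, y => y
  | x, .bot => x
  | .top, _ => .top
  | _, .top => .top
  | .a, .a => .a
  | .a, .b => .b
  | .b, .a => .b
  | .b, .b => .b
  | .c, .c => .c
  | _, _ => .top

def infN : N5 → N5 → N5
  | .top, y => y
  | x, .top => x
  | .bot, _ => .bot
  | _, .bot => .bot
  | .a, .a => .a
  | .a, .b => .a
  | .b, .a => .a
  | .b, .b => .b
  | .c, .c => .c
  | _, _ => .bot

instance : Lattice N5 where
  le := (· ≤ ·)
  lt := (· < ·)
  le_refl := by decide
  le_trans := by decide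
  lt_iff_le_not_ge := fun _ _ => Iff.rfl
  le_antisymm := by decide
  sup := supN
  le_sup_left := by decide
  le_sup_right := by decide
  sup_le := by decide
  inf := infN
  inf_le_left := by decide
  inf_le_right := by decide
  le_inf := by decide

theorem not_semimodular : ¬ IsSemimodular N5 := by
  intro h
  have hcov : N5.bot ⋖ N5.c := by
    constructor
    · decide
    · intro x hx hx'; revert hx hx'; cases x <;> decide
  rcases h .bot .c .a hcov (by decide) with h' | h'
  · exact absurd h' (by decide)
  · obtain ⟨h1, h2⟩ := h'
    exact h2 (c := N5.b) (by decide) (by decide)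

end N5

/-! K -/
inductive KL where
  | o | i | A (x : ℚ) | B (x : ℚ)

namespace KL

def le : KL → KL → Prop
  | .o, _ => True
  | _, .i => True
  | .A x, .A y => x ≤ y
  | .B x, .B y => x ≤ y
  | _, _ => False

instance : LE KL := ⟨le⟩
instance : LT KL := ⟨fun x y => x ≤ y ∧ ¬ y ≤ x⟩

theorem le_def (x y : KL) : x ≤ y ↔ le x y := Iff.rfl
theorem lt_def (x y : KL) : x < y ↔ (x ≤ y ∧ ¬ y ≤ x) := Iff.rfl

def supK : KL → KL → KL
  | .o, y => y
  | x, .o => x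
  | .i, _ => .i
  | _, .i => .i
  | .A x, .A y => .A (max x y)
  | .B x, .B y => .B (max x y)
  | _, _ => .i

def infK : KL → KL → KL
  | .i, y => y
  | x, .i => x
  | .o, _ => .o
  | _, .o => .o
  | .A x, .A y => .A (min x y)
  | .B x, .B y => .B (min x y)
  | _, _ => .o

instance : Lattice KL where
  le := (· ≤ ·)
  lt := (· < ·)
  le_refl := by intro a; cases a <;> simp [le_def, le]
  le_trans := by
    intro a b c hab hbc
    cases a <;> cases b <;> cases c <;> simp_all [le_def, le] <;> linarith
  lt_iff_le_not_ge := fun _ _ => Iff.rfl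
  le_antisymm := by
    intro a b hab hba
    cases a <;> cases b <;> simp_all [le_def, le] <;> linarith
  sup := supK
  le_sup_left := by
    intro a b; cases a <;> cases b <;> simp [le_def, le, supK]
  le_sup_right := by
    intro a b; cases a <;> cases b <;> simp [le_def, le, supK]
  sup_le := by
    intro a b c hac hbc
    cases a <;> cases b <;> cases c <;> simp_all [le_def, le, supK]
  inf := infK
  inf_le_left := by
    intro a b; cases a <;> cases b <;> simp [le_def, le, infK]
  inf_le_right := by
    intro a b; cases a <;> cases b <;> simp [le_def, le, infK]
  le_inf := by
    intro a b c hab hac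
    cases a <;> cases b <;> cases c <;> simp_all [le_def, le, infK]

theorem not_covBy (x y : KL) : ¬ x ⋖ y := by
  rintro ⟨hlt, hmid⟩
  obtain ⟨hle, hnle⟩ := hlt
  cases x <;> cases y <;> simp_all [le_def, le]
  · exact hmid (c := .A 0) (by simp [lt_def, le_def, le]) (by simp [lt_def, le_def, le])
  · exact hmid (c := .A (‹ℚ› - 1)) (by simp [lt_def, le_def, le]) (by simp [lt_def, le_def, le])
  · exact hmid (c := .B (‹ℚ› - 1)) (by simp [lt_def, le_def, le]) (by simp [lt_def, le_def, le])
  · rename_i x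
    exact hmid (c := .A (x + 1)) (by simp [lt_def, le_def, le]) (by simp [lt_def, le_def, le])
  · rename_i x y
    exact hmid (c := .A ((x + y) / 2)) (by constructor <;> simp [le_def, le] <;> linarith)
      (by constructor <;> simp [le_def, le] <;> linarith)
  · rename_i x
    exact hmid (c := .B (x + 1)) (by simp [lt_def, le_def, le]) (by simp [lt_def, le_def, le])
  · rename_i x y
    exact hmid (c := .B ((x + y) / 2)) (by constructor <;> simp [le_def, le] <;> linarith)
      (by constructor <;> simp [le_def, le] <;> linarith)

theorem semimodular : IsSemimodular KL := fun _ _ _ h _ => absurd h (not_covBy _ _)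

end KL

def f : KL → N5
  | .o => .bot
  | .i => .top
  | .A x => if x < 0 then .a else .b
  | .B _ => .c

theorem KL.sup_def (x y : KL) : x ⊔ y = KL.supK x y := rfl
theorem KL.inf_def (x y : KL) : x ⊓ y = KL.infK x y := rfl

theorem f_sup (x y : KL) : f (x ⊔ y) = f x ⊔ f y := by
  have hb : ∀ m : N5, N5.bot ⊔ m = m := by decide
  have hb' : ∀ m : N5, m ⊔ N5.bot = m := by decide
  have ht : ∀ m : N5, N5.top ⊔ m = N5.top := by decide
  have ht' : ∀ m : N5, m ⊔ N5.top = N5.top := by decide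
  cases x <;> cases y <;>
    simp only [KL.sup_def, KL.supK, f, hb, hb', ht, ht'] <;>
    try rfl
  all_goals try { split_ifs <;> decide }
  all_goals {
    rename_i x y
    split_ifs <;>
      first
        | decide
        | (exfalso; rcases max_cases x y with ⟨he, _⟩ | ⟨he, _⟩ <;> linarith [he.le, he.ge]) }

theorem f_inf (x y : KL) : f (x ⊓ y) = f x ⊓ f y := by
  have hb : ∀ m : N5, N5.bot ⊓ m = N5.bot := by decide
  have hb' : ∀ m : N5, m ⊓ N5.bot = N5.bot := by decide
  have ht : ∀ m : N5, N5.top ⊓ m = m := by decide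
  have ht' : ∀ m : N5, m ⊓ N5.top = m := by decide
  cases x <;> cases y <;>
    simp only [KL.inf_def, KL.infK, f, hb, hb', ht, ht'] <;>
    try rfl
  all_goals try { split_ifs <;> decide }
  all_goals {
    rename_i x y
    split_ifs <;>
      first
        | decide
        | (exfalso; rcases min_cases x y with ⟨he, _⟩ | ⟨he, _⟩ <;> linarith [he.le, he.ge]) }

/-- There exists a semimodular lattice `K` and a congruence `α` of `K` (encoded as the
kernel of a surjective lattice homomorphism) such that the quotient `K/α` is not
semimodular. -/
theorem exists_semimodular_with_nonsemimodular_quotient :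
    ∃ (K M : Type) (iK : Lattice K) (iM : Lattice M),
      @QuotientNotSemimodularWitness K M iK iM := by
  refine ⟨KL, N5, inferInstance, inferInstance, ⟨⟨⟨⟨f, f_sup⟩, f_inf⟩, ?_⟩, KL.semimodular, N5.not_semimodular⟩⟩
  intro m
  cases m
  · exact ⟨.o, rfl⟩
  · exact ⟨.A (-1), by show (if (-1:ℚ) < 0 then N5.a else N5.b) = N5.a; norm_num⟩
  · exact ⟨.A 1, by show (if (1:ℚ) < 0 then N5.a else N5.b) = N5.b; norm_num⟩
  · exact ⟨.B 0, rfl⟩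
  · exact ⟨.i, rfl⟩
end

section
/- If L is a finite slim lattice (i.e., the poset of nonzero join-irreducible elements of L is the union of two chains) and α is a congruence of L, then the quotient L/α is also slim: the poset of nonzero join-irreducible elements of L/α is the union of two chains. -/
/-- A finite lattice is slim if the set of its nonzero join-irreducible elements is the
union of two chains. -/
def IsSlim (L : Type*) [Lattice L] : Prop :=
  ∃ C C' : Set L, IsChain (· ≤ ·) C ∧ IsChain (· ≤ ·) C' ∧
    {a : L | SupIrred a} ⊆ C ∪ C'

/-- If `L` is a finite slim lattice and `α` is a congruence of `L` (encoded as the kernel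
of the surjective lattice homomorphism `f`), then the quotient `L/α` (encoded as `M`)
is also slim. -/
theorem quotient_slim_of_slim
    {L M : Type*} [Lattice L] [Fintype L] [Lattice M]
    (hL : IsSlim L)
    (f : LatticeHom L M) (hf : Function.Surjective f) :
    IsSlim M := by
  classical
  obtain ⟨C, C', hC, hC', hsub⟩ := hL
  refine ⟨f '' C, f '' C', hC.image_of_map_rel _ _ f (fun _ _ h => OrderHomClass.mono f h),
    hC'.image_of_map_rel _ _ f (fun _ _ h => OrderHomClass.mono f h), ?_⟩
  rintro b hb
  -- find a SupIrred preimage of b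
  set S : Finset L := Finset.univ.filter (fun x => f x = b) with hS
  obtain ⟨x₀, hx₀⟩ := hf b
  have hne : S.Nonempty := ⟨x₀, by simp [hS, hx₀]⟩
  set a : L := S.inf' hne id with ha
  have hfa : f a = b := by
    have : f a = S.inf' hne (fun x => f x) := map_finset_inf' f hne id
    rw [this]
    have : ∀ x ∈ S, f x = b := fun x hx => by simpa [hS] using hx
    calc S.inf' hne (fun x => f x) = S.inf' hne (fun _ => b) := Finset.inf'_congr hne rfl this
    _ = b := Finset.inf'_const hne b
  have hmem : ∀ x, f x = b → a ≤ x := fun x hx =>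
    Finset.inf'_le id (by simp [hS, hx])
  have hairr : SupIrred a := by
    constructor
    · intro hmin
      apply hb.1
      intro c hc
      obtain ⟨y, hy⟩ := hf c
      have h1 : f (y ⊓ a) = c ⊓ b := by simp [map_inf, hy, hfa]
      have h2 : a ≤ y ⊓ a := hmin inf_le_right
      have := OrderHomClass.mono f h2
      rw [hfa, h1] at this
      exact this.trans inf_le_left
    · intro u v huv
      have : f u ⊔ f v = b := by rw [← map_sup, huv, hfa]
      have hub : f u ≤ b := by rw [← this]; exact le_sup_left
      have hvb : f v ≤ b := by rw [← this]; exact le_sup_right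
      rcases hb.2 this with h | h
      · exact Or.inl (le_antisymm (le_sup_left.trans_eq huv) (hmem u h))
      · exact Or.inr (le_antisymm (le_sup_right.trans_eq huv) (hmem v h))
  have := hsub hairr
  rcases this with h | h
  · exact Or.inl ⟨a, h, hfa⟩
  · exact Or.inr ⟨a, h, hfa⟩
end

section
/- Let D be a finite distributive lattice, u ∈ D, X = ↑u the principal filter of u, and Y = {p ∈ Ji(D) : p ≰ u}. Then the map μ : Y → Ji(X) defined by μ(p) = u ∨ p is an order isomorphism between the poset Y (with the order inherited from D) and the poset of nonzero join-irreducible elements of the lattice X = [u, 1]. -/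
/-- Let `D` be a finite distributive lattice, `u ∈ D`, `X = ↑u` its principal filter
(a lattice in its own right, with least element `u`), and
`Y = {p ∈ Ji(D) : p ≰ u}`.  Then `p ↦ u ⊔ p` is an order isomorphism from `Y` (with the
order inherited from `D`) onto the poset `Ji(X)` of nonzero join-irreducible elements of
`X`. -/
theorem filter_supIrred_orderIso
    {D : Type*} [DistribLattice D] [Fintype D] (u : D) :
    ∃ e : {p : D // SupIrred p ∧ ¬ p ≤ u} ≃o {z : Set.Ici u // SupIrred z},
      ∀ p : {p : D // SupIrred p ∧ ¬ p ≤ u}, ((e p : Set.Ici u) : D) = u ⊔ p.1 := by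
  classical
  haveI : Nonempty D := ⟨u⟩
  haveI : OrderBot D := Fintype.toOrderBot D
  -- coercion of sup in `Set.Ici u`
  have coe_sup : ∀ a b : Set.Ici u, ((a ⊔ b : Set.Ici u) : D) = (a : D) ⊔ (b : D) :=
    fun a b => rfl
  -- the map
  have hmem : ∀ p : {p : D // SupIrred p ∧ ¬ p ≤ u}, u ⊔ p.1 ∈ Set.Ici u :=
    fun p => le_sup_left
  have hprime : ∀ p : D, SupIrred p → SupPrime p := fun p hp => hp.supPrime
  have hIrr : ∀ p : {p : D // SupIrred p ∧ ¬ p ≤ u},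
      SupIrred (⟨u ⊔ p.1, hmem p⟩ : Set.Ici u) := by
    rintro ⟨p, hp, hpu⟩
    constructor
    · intro hmin
      have h0 : (⟨u, le_rfl⟩ : Set.Ici u) ≤ ⟨u ⊔ p, le_sup_left⟩ :=
        show (u : D) ≤ u ⊔ p from le_sup_left
      have := hmin h0
      exact hpu (le_trans le_sup_right this)
    · rintro ⟨a, ha⟩ ⟨b, hb⟩ hab
      have hab' : a ⊔ b = u ⊔ p := congrArg Subtype.val hab
      have hple : p ≤ a ⊔ b := hab' ▸ le_sup_right
      rcases (hprime p hp).le_sup.1 hple with h | h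
      · left
        refine Subtype.ext (le_antisymm ?_ (sup_le ha h))
        show a ≤ u ⊔ p
        rw [← hab']; exact le_sup_left
      · right
        refine Subtype.ext (le_antisymm ?_ (sup_le hb h))
        show b ≤ u ⊔ p
        rw [← hab']; exact le_sup_right
  set f : {p : D // SupIrred p ∧ ¬ p ≤ u} → {z : Set.Ici u // SupIrred z} :=
    fun p => ⟨⟨u ⊔ p.1, hmem p⟩, hIrr p⟩ with hf
  -- order reflection
  have hle : ∀ p q : {p : D // SupIrred p ∧ ¬ p ≤ u}, f p ≤ f q ↔ p ≤ q := by
    rintro ⟨p, hp, hpu⟩ ⟨q, hq, hqu⟩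
    constructor
    · intro h
      have h' : u ⊔ p ≤ u ⊔ q := h
      have : p ≤ u ⊔ q := le_trans le_sup_right h'
      rcases (hprime p hp).le_sup.1 this with h | h
      · exact absurd h hpu
      · exact h
    · intro h
      show (⟨u ⊔ p, _⟩ : Set.Ici u) ≤ ⟨u ⊔ q, _⟩
      exact sup_le_sup_left h u
  have hinj : Function.Injective f := fun p q hpq =>
    le_antisymm ((hle p q).1 hpq.le) ((hle q p).1 hpq.ge)
  -- surjectivity
  have hsurj : Function.Surjective f := by
    rintro ⟨⟨z, hz⟩, hzIrr⟩
    have hzne : z ≠ u := by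
      intro h
      apply hzIrr.1
      intro w hw
      show (⟨z, hz⟩ : Set.Ici u) ≤ w
      exact h ▸ w.2
    obtain ⟨s, hs, hsIrr⟩ := exists_supIrred_decomposition z
    set t := s.filter (fun p => ¬ p ≤ u) with ht
    have hz1 : z = u ⊔ t.sup id := by
      refine le_antisymm ?_ ?_
      · conv_lhs => rw [← hs]
        refine Finset.sup_le fun b hb => ?_
        by_cases hbu : b ≤ u
        · exact le_trans hbu le_sup_left
        · exact le_trans (Finset.le_sup (f := id) (Finset.mem_filter.2 ⟨hb, hbu⟩))
            le_sup_right
      · refine sup_le hz (Finset.sup_le fun b hb => ?_)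
        exact hs ▸ Finset.le_sup (f := id) (Finset.mem_filter.1 hb).1
    -- find a single irreducible
    have key : ∀ (t : Finset D), (∀ p ∈ t, SupIrred p ∧ ¬ p ≤ u) →
        z = u ⊔ t.sup id → ∃ p ∈ t, z = u ⊔ p := by
      intro t
      induction t using Finset.induction with
      | empty =>
        intro _ hzt
        exact absurd (by simpa using hzt) hzne
      | @insert a s hnotmem ih =>
        intro hps hzt
        rw [Finset.sup_insert] at hzt
        have hzt' : (⟨z, hz⟩ : Set.Ici u) =
            (⟨u ⊔ a, le_sup_left⟩ : Set.Ici u) ⊔ ⟨u ⊔ s.sup id, le_sup_left⟩ := by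
          apply Subtype.ext
          rw [coe_sup]
          simp only [hzt, id_eq]
          rw [sup_sup_distrib_left]
        rcases hzIrr.2 hzt'.symm with h | h
        · exact ⟨a, Finset.mem_insert_self a s,
            (congrArg Subtype.val h).symm⟩
        · obtain ⟨p, hp, hzp⟩ := ih (fun p hp => hps p (Finset.mem_insert_of_mem hp))
            (congrArg Subtype.val h).symm
          exact ⟨p, Finset.mem_insert_of_mem hp, hzp⟩
    obtain ⟨p, hpt, hzp⟩ := key t
      (fun p hp => ⟨hsIrr (Finset.mem_filter.1 hp).1, (Finset.mem_filter.1 hp).2⟩) hz1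
    refine ⟨⟨p, hsIrr (Finset.mem_filter.1 hpt).1, (Finset.mem_filter.1 hpt).2⟩, ?_⟩
    exact Subtype.ext (Subtype.ext hzp.symm)
  refine ⟨⟨Equiv.ofBijective f ⟨hinj, hsurj⟩, ?_⟩, fun p => rfl⟩
  intro p q
  exact hle p q
end

section
/- Let P be a finite poset, j ∈ P, and U_j the set of covers of j in P. Pick i ∉ P and define a relation ≺ on P ∪ {i} by: x ≺ y iff (x, y ∈ P and x ≺_P y) or (x = i and y ∈ U_j). Then ≺ is the covering relation of a partial order on P ∪ {i} in which i is a minimal element whose set of covers equals U_j, and the restriction of this order to P coincides with the original order on P. -/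
/-- "Adding a brother" of `j` to the poset `P`: on `Option P`, where `none` encodes the
new element `i`, we let `x ≤ y` iff both are old elements with `x ≤_P y`, or `x = i` and
`y` lies above some cover of `j`, or `x = y = i`. -/
def broLe {P : Type*} [PartialOrder P] (j : P) : Option P → Option P → Prop
  | some a, some b => a ≤ b
  | none, some b => ∃ u : P, j ⋖ u ∧ u ≤ b
  | none, none => True
  | some _, none => False

/-- For a finite poset `P`, `j ∈ P` and a new element `i ∉ P` (encoded as `none` in
`Option P`), the relation `x ≺ y` iff (`x, y ∈ P` and `x ≺_P y`) or (`x = i` and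
`y` is a cover of `j`) is the covering relation of a partial order on `P ∪ {i}` in which
`i` is a minimal element whose set of covers equals the set `U_j` of covers of `j`, and
whose restriction to `P` coincides with the original order. -/
theorem broLe_partialOrder_and_covers
    {P : Type*} [PartialOrder P] [Fintype P] (j : P) :
    -- `broLe j` is a partial order
    (Reflexive (broLe j) ∧ AntiSymmetric (broLe j) ∧ Transitive (broLe j)) ∧
    -- its covering relation is exactly the prescribed one
    (∀ x y : Option P,
      ((broLe j x y ∧ x ≠ y) ∧
        ∀ z : Option P, broLe j x z → x ≠ z → broLe j z y → z ≠ y → False) ↔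
      ((∃ a b : P, x = some a ∧ y = some b ∧ a ⋖ b) ∨
        (x = none ∧ ∃ u : P, j ⋖ u ∧ y = some u))) ∧
    -- `i` (= `none`) is a minimal element
    (∀ x : Option P, broLe j x none → x = none) ∧
    -- the restriction of the new order to `P` is the original order
    (∀ a b : P, broLe j (some a) (some b) ↔ a ≤ b) := by
  have hsn : ∀ a : P, ¬ broLe j (some a) none := fun a h => h
  refine ⟨⟨?_, ?_, ?_⟩, ?_, ?_, fun a b => Iff.rfl⟩
  · intro x; cases x with
    | none => trivial
    | some a => exact le_refl a
  · intro x y hxy hyx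
    cases x with
    | none => cases y with
      | none => rfl
      | some b => exact absurd hyx (hsn b)
    | some a => cases y with
      | none => exact absurd hxy (hsn a)
      | some b => exact congrArg some (le_antisymm hxy hyx)
  · intro x y z hxy hyz
    cases x with
    | none => cases y with
      | none => exact hyz
      | some b => cases z with
        | none => exact absurd hyz (hsn b)
        | some c =>
          obtain ⟨u, hu, hub⟩ := hxy
          exact ⟨u, hu, le_trans hub hyz⟩
    | some a => cases y with
      | none => exact absurd hxy (hsn a)
      | some b => cases z with
        | none => exact absurd hyz (hsn b)
        | some c => exact le_trans hxy hyz
  · intro x y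
    constructor
    · rintro ⟨⟨hle, hne⟩, hmin⟩
      cases x with
      | some a => cases y with
        | none => exact absurd hle (hsn a)
        | some b =>
          refine Or.inl ⟨a, b, rfl, rfl,
            lt_of_le_of_ne hle (fun h => hne (by rw [h])), ?_⟩
          intro c hac hcb
          exact hmin (some c) hac.le (by simp [hac.ne]) hcb.le (by simp [hcb.ne])
      | none => cases y with
        | none => exact absurd rfl hne
        | some b =>
          obtain ⟨u, hu, hub⟩ := hle
          have hub' : u = b := by
            by_contra h
            exact hmin (some u) ⟨u, hu, le_refl u⟩ (by simp) hub (by simp [h])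
          exact Or.inr ⟨rfl, u, hu, by rw [hub']⟩
    · rintro (⟨a, b, rfl, rfl, hab⟩ | ⟨rfl, u, hu, rfl⟩)
      · refine ⟨⟨hab.le, by simp [hab.ne]⟩, ?_⟩
        intro z hxz hxz' hzy hzy'
        cases z with
        | none => exact hsn a hxz
        | some c =>
          exact hab.2 (lt_of_le_of_ne hxz (fun h => hxz' (by rw [h])))
            (lt_of_le_of_ne hzy (fun h => hzy' (by rw [h])))
      · refine ⟨⟨⟨u, hu, le_refl u⟩, by simp⟩, ?_⟩
        intro z hxz hxz' hzy hzy'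
        cases z with
        | none => exact hxz' rfl
        | some c =>
          obtain ⟨v, hv, hvc⟩ := hxz
          have hcu : c ≤ u := hzy
          exact hu.2 hv.lt
            (lt_of_le_of_lt hvc (lt_of_le_of_ne hcu (fun h => hzy' (by rw [h]))))
  · intro x hx
    cases x with
    | none => rfl
    | some a => exact absurd hx (hsn a)
end

section
/- Let L be a finite lattice, α a congruence of L, x/α ⋖ y/α and x/α < z/α in L/α, where x is the largest element of its α-block. Then there exist x ≤ y' with x ⋖ y' in L and y'/α = y/α. (Every covering in the quotient at a block-maximal element is witnessed by a covering in L.) -/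
/-- Let `L` be a finite lattice and `α` a congruence of `L` (encoded as the kernel of the
surjective lattice homomorphism `f`).  Suppose `x/α ⋖ y/α` and `x/α < z/α` in the
quotient, where `x` is the largest element of its `α`-block.  Then the covering in the
quotient is witnessed by a covering in `L`: there is `y'` with `x ⋖ y'` and
`y'/α = y/α`. -/
theorem cover_in_quotient_witnessed
    {L M : Type*} [Lattice L] [Fintype L] [Lattice M]
    (f : LatticeHom L M) (hf : Function.Surjective f)
    {x y z : L}
    (hxmax : ∀ w : L, f w = f x → w ≤ x)
    (hcov : f x ⋖ f y) (hlt : f x < f z) :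
    ∃ y' : L, x ⋖ y' ∧ f y' = f y := by
  have hxy : x < x ⊔ y := by
    rcases lt_or_eq_of_le (le_sup_left : x ≤ x ⊔ y) with h | h
    · exact h
    · exfalso
      have : f y ≤ f x := by
        have := congrArg f h
        rw [map_sup] at this
        exact le_of_sup_eq ((sup_comm _ _).trans this.symm)
      exact absurd this hcov.lt.not_ge
  obtain ⟨y', hcy, hle⟩ := hxy.exists_covby_le
  refine ⟨y', hcy, ?_⟩
  have h1 : f x ≤ f y' := OrderHomClass.monotone f hcy.le
  have h2 : f y' ≤ f y := by
    have := OrderHomClass.monotone f hle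
    rwa [map_sup, sup_eq_right.mpr hcov.lt.le] at this
  rcases lt_or_eq_of_le h1 with h | h
  · exact h2.lt_or_eq.resolve_left (hcov.2 h)
  · exact absurd (hxmax y' h.symm) hcy.lt.not_ge
end

section
/- Let P be a finite poset and let i and i' be two elements of a finite poset P' extending P (P' = P ∪ {i}) such that i is minimal in P' and the set of covers of i in P' equals the set of covers of some j ∈ P in P. Then the order filters of P' are exactly the order filters F of P, together with the sets F ∪ {i} for those order filters F of P containing all covers of j. -/
/-- Let `P' = P +_j^bro i` be the finite poset obtained from `P` by adding a new minimal
element `i` (encoded as `none`) whose covers are exactly the covers of `j`.  The order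
filters (up-sets) of `P'` are exactly the order filters `F` of `P`, together with the
sets `F ∪ {i}` for those order filters `F` of `P` containing all covers of `j`. -/
theorem orderFilters_of_brother_extension
    {P : Type*} [PartialOrder P] [Fintype P] (j : P) (F : Set (Option P)) :
    (∀ x ∈ F, ∀ y : Option P, broLe j x y → y ∈ F) ↔
      ((∃ G : Set P, (∀ a ∈ G, ∀ b : P, a ≤ b → b ∈ G) ∧ F = some '' G) ∨
       (∃ G : Set P, (∀ a ∈ G, ∀ b : P, a ≤ b → b ∈ G) ∧
          (∀ u : P, j ⋖ u → u ∈ G) ∧ F = insert none (some '' G))) := by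
  constructor
  · intro h
    set G : Set P := {a | some a ∈ F} with hG
    have hGfilt : ∀ a ∈ G, ∀ b : P, a ≤ b → b ∈ G := by
      intro a ha b hab
      exact h (some a) ha (some b) hab
    by_cases hn : none ∈ F
    · right
      refine ⟨G, hGfilt, ?_, ?_⟩
      · intro u hu
        exact h none hn (some u) ⟨u, hu, le_refl u⟩
      · ext x
        cases x with
        | none => simpa using hn
        | some a =>
          simp [Set.mem_insert_iff, Set.mem_image, hG]
    · left
      refine ⟨G, hGfilt, ?_⟩
      ext x
      cases x with
      | none => simpa using hn
      | some a => simp [Set.mem_image, hG]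
  · rintro (⟨G, hGf, rfl⟩ | ⟨G, hGf, hcov, rfl⟩)
    · rintro x ⟨a, ha, rfl⟩ y hxy
      cases y with
      | none => exact absurd hxy (by simp [broLe])
      | some b => exact ⟨b, hGf a ha b hxy, rfl⟩
    · intro x hx y hxy
      cases x with
      | none =>
        cases y with
        | none => exact Set.mem_insert _ _
        | some b =>
          obtain ⟨u, hu, hub⟩ := hxy
          exact Set.mem_insert_of_mem _ ⟨b, hGf u (hcov u hu) b hub, rfl⟩
      | some a =>
        cases y with
        | none => exact absurd hxy (by simp [broLe])
        | some b =>
          have ha : a ∈ G := by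
            rcases hx with hx | hx
            · simp at hx
            · simpa using hx
          exact Set.mem_insert_of_mem _ ⟨b, hGf a ha b hxy, rfl⟩
end
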